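/- (Proposition 1, 2d reciprocity.) Let A, B, C ∈ ℝ² be pairwise distinct and ωA, ωB, ωC ∈ ℝ. Then (d/dt at t = 0 of I₂(ωB, ωC, C − (B + t·K₂(A, ωA, B)))) + (d/dt at t = 0 of I₂(ωA, ωB, (B + t·K₂(C, ωC, B)) − A)) = 0. That is, A's action on B affects the interaction energy between B and C in an exactly equal and opposite way as C's action on B affects the interaction energy between A and B. -/

import Mathlib

open MeasureTheory Real

noncomputable section

/-- The scalar cross product on `EuclideanSpace ℝ (Fin 2)`: `cross2 u v = u₁v₂ − u₂v₁`. -/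
def cross2 (u v : EuclideanSpace ℝ (Fin 2)) : ℝ := u 0 * v 1 - u 1 * v 0

/-- The rotation by 90 degrees: `v^⊥ = (−v₂, v₁)`. -/
def perp (v : EuclideanSpace ℝ (Fin 2)) : EuclideanSpace ℝ (Fin 2) :=
  (WithLp.equiv 2 (Fin 2 → ℝ)).symm ![-(v 1), v 0]

/-- The 2d Biot-Savart velocity induced at `x` by a point vortex at `p` with scalar
vorticity `w`: `K₂(p, w, x) = (w/(2π))·(x − p)^⊥/‖x − p‖²`. -/
def K2 (p : EuclideanSpace ℝ (Fin 2)) (w : ℝ) (x : EuclideanSpace ℝ (Fin 2)) :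
    EuclideanSpace ℝ (Fin 2) :=
  (w / (2 * π)) • ((‖x - p‖ ^ 2)⁻¹ • perp (x - p))

/-- The 2d interaction energy of scalar vorticities `wb, wc` at displacement `d`:
`I₂(wb, wc, d) = (1/(4π))·wb·wc·log ‖d‖`. -/
def I2 (wb wc : ℝ) (d : EuclideanSpace ℝ (Fin 2)) : ℝ :=
  (1 / (4 * π)) * wb * wc * Real.log ‖d‖

lemma hasDeriv_log_norm (d v : EuclideanSpace ℝ (Fin 2)) (hd : d ≠ 0) :
    HasDerivAt (fun t : ℝ => Real.log ‖d + t • v‖)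
      (inner ℝ d v / ‖d‖ ^ 2 : ℝ) 0 := by
  have hd2 : ‖d‖ ^ 2 ≠ 0 := pow_ne_zero _ (norm_ne_zero_iff.mpr hd)
  have hf : ∀ t : ℝ, ‖d + t • v‖ ^ 2
      = ‖d‖ ^ 2 + 2 * (t * (inner ℝ d v : ℝ)) + t ^ 2 * ‖v‖ ^ 2 := by
    intro t
    rw [norm_add_sq_real, real_inner_smul_right, norm_smul]
    simp [Real.norm_eq_abs, mul_pow, sq_abs]
  have h1 : HasDerivAt (fun t : ℝ => ‖d + t • v‖ ^ 2) (2 * (inner ℝ d v : ℝ)) 0 := by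
    have hpoly : HasDerivAt
        (fun t : ℝ => ‖d‖ ^ 2 + 2 * (t * (inner ℝ d v : ℝ)) + t ^ 2 * ‖v‖ ^ 2)
        (2 * (inner ℝ d v : ℝ)) 0 := by
      have ha : HasDerivAt (fun t : ℝ => 2 * (t * (inner ℝ d v : ℝ)))
          (2 * (inner ℝ d v : ℝ)) 0 := by
        simpa using ((hasDerivAt_id (0:ℝ)).mul_const (inner ℝ d v : ℝ)).const_mul 2
      have hb : HasDerivAt (fun t : ℝ => t ^ 2 * ‖v‖ ^ 2) 0 0 := by
        simpa using (hasDerivAt_pow 2 (0:ℝ)).mul_const (‖v‖ ^ 2)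
      have := (ha.const_add (‖d‖ ^ 2)).add hb
      rw [add_zero] at this
      exact this
    have : (fun t : ℝ => ‖d + t • v‖ ^ 2)
        = fun t : ℝ => ‖d‖ ^ 2 + 2 * (t * (inner ℝ d v : ℝ)) + t ^ 2 * ‖v‖ ^ 2 :=
      funext hf
    rw [this]; exact hpoly
  have h0 : ‖d + (0:ℝ) • v‖ ^ 2 ≠ 0 := by simpa using hd2
  have h2 := h1.log h0
  have heq : (fun t : ℝ => Real.log ‖d + t • v‖)
      = fun t : ℝ => Real.log (‖d + t • v‖ ^ 2) / 2 := by
    funext t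
    rw [Real.log_pow]; push_cast; ring
  rw [heq]
  have := h2.div_const 2
  convert this using 1
  · rfl
  · rfl
  simp
  ring

/-- Proposition 1 (2d reciprocity): `A`'s action on `B` affects the interaction energy
between `B` and `C` in an exactly equal and opposite way as `C`'s action on `B`
affects the interaction energy between `A` and `B`. -/
theorem two_d_reciprocity (A B C : EuclideanSpace ℝ (Fin 2)) (ωA ωB ωC : ℝ)
    (hAB : A ≠ B) (hBC : B ≠ C) (hAC : A ≠ C) :
    deriv (fun t : ℝ => I2 ωB ωC (C - (B + t • K2 A ωA B))) 0 +
      deriv (fun t : ℝ => I2 ωA ωB ((B + t • K2 C ωC B) - A)) 0 = 0 := by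
  have hCB : C - B ≠ 0 := sub_ne_zero.mpr (Ne.symm hBC)
  have hBA : B - A ≠ 0 := sub_ne_zero.mpr (Ne.symm hAB)
  have hCB2 : ‖C - B‖ ^ 2 ≠ 0 := pow_ne_zero _ (norm_ne_zero_iff.mpr hCB)
  have hBA2 : ‖B - A‖ ^ 2 ≠ 0 := pow_ne_zero _ (norm_ne_zero_iff.mpr hBA)
  have hpi : (π : ℝ) ≠ 0 := Real.pi_ne_zero
  -- first function
  have e1 : (fun t : ℝ => I2 ωB ωC (C - (B + t • K2 A ωA B)))
      = fun t : ℝ => ((1 / (4 * π)) * ωB * ωC) *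
          Real.log ‖(C - B) + t • (-(K2 A ωA B))‖ := by
    funext t
    have : C - (B + t • K2 A ωA B) = (C - B) + t • (-(K2 A ωA B)) := by
      rw [smul_neg]; abel
    rw [I2, this]
  have e2 : (fun t : ℝ => I2 ωA ωB ((B + t • K2 C ωC B) - A))
      = fun t : ℝ => ((1 / (4 * π)) * ωA * ωB) *
          Real.log ‖(B - A) + t • (K2 C ωC B)‖ := by
    funext t
    have : (B + t • K2 C ωC B) - A = (B - A) + t • (K2 C ωC B) := by abel
    rw [I2, this]
  have d1 := ((hasDeriv_log_norm (C - B) (-(K2 A ωA B)) hCB).const_mul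
    ((1 / (4 * π)) * ωB * ωC)).deriv
  have d2 := ((hasDeriv_log_norm (B - A) (K2 C ωC B) hBA).const_mul
    ((1 / (4 * π)) * ωA * ωB)).deriv
  rw [e1, e2, d1, d2]
  have hnorm : ‖B - C‖ = ‖C - B‖ := norm_sub_rev _ _
  have ip1 : (inner ℝ (C - B) (-(K2 A ωA B)) : ℝ)
      = -((ωA / (2 * π)) * ((‖B - A‖ ^ 2)⁻¹ *
          ((B - A) 0 * (C - B) 1 - (B - A) 1 * (C - B) 0))) := by
    have hp : (inner ℝ (C - B) (perp (B - A)) : ℝ)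
        = (B - A) 0 * (C - B) 1 - (B - A) 1 * (C - B) 0 := by
      simp [perp, PiLp.inner_apply, Fin.sum_univ_two, WithLp.equiv_symm_apply, PiLp.toLp_apply]
      ring
    rw [inner_neg_right, K2, real_inner_smul_right, real_inner_smul_right, hp]
  have ip2 : (inner ℝ (B - A) (K2 C ωC B) : ℝ)
      = (ωC / (2 * π)) * ((‖B - C‖ ^ 2)⁻¹ *
          ((B - C) 0 * (B - A) 1 - (B - C) 1 * (B - A) 0)) := by
    have hp : (inner ℝ (B - A) (perp (B - C)) : ℝ)
        = (B - C) 0 * (B - A) 1 - (B - C) 1 * (B - A) 0 := by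
      simp [perp, PiLp.inner_apply, Fin.sum_univ_two, WithLp.equiv_symm_apply, PiLp.toLp_apply]
      ring
    rw [K2, real_inner_smul_right, real_inner_smul_right, hp]
  rw [ip1, ip2, hnorm]
  have hcoord : (B - C) 0 * (B - A) 1 - (B - C) 1 * (B - A) 0
      = (B - A) 0 * (C - B) 1 - (B - A) 1 * (C - B) 0 := by
    simp only [PiLp.sub_apply]
    ring
  rw [hcoord]
  field_simp
  ring
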